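/- Let n ≥ 2 and let u : ℝⁿ\{0} → ℝ be a continuously differentiable 0-homogeneous function. Then the vector-valued identity ∫_{S^{n-1}} u(θ) θ dσ_{n-1}(θ) = (1/(n-1)) ∫_{S^{n-1}} ∇u(θ) dσ_{n-1}(θ) holds, where both sides are vectors in ℝⁿ and the integrals are taken coordinatewise. -/

import Mathlib

open MeasureTheory Real
open scoped RealInnerProductSpace

/-- The standard Gaussian measure on `ℝⁿ`. -/
noncomputable def stdGaussian (n : ℕ) : Measure (EuclideanSpace ℝ (Fin n)) :=
  volume.withDensity fun x =>
    ENNReal.ofReal ((2 * π) ^ (-(n : ℝ) / 2) * Real.exp (-‖x‖ ^ 2 / 2))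

/-- The uniform (rotation-invariant) probability measure on the unit sphere `S^{n-1}`,
realized as the image of the standard Gaussian measure under `x ↦ x/‖x‖`. -/
noncomputable def sphereUniform (n : ℕ) : Measure (EuclideanSpace ℝ (Fin n)) :=
  (stdGaussian n).map fun x => ‖x‖⁻¹ • x

namespace Statement12Aux

open Set Metric

/-! ### A fixed bump function on `ℝ` -/

noncomputable def phib : ContDiffBump (5/2 : ℝ) :=
  ⟨1/2, 3/2, by norm_num, by norm_num⟩

lemma phib_zero {s : ℝ} (hs : s ≤ 1 ∨ 4 ≤ s) : phib s = 0 := by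
  apply phib.zero_of_le_dist
  have : phib.rOut = 3/2 := rfl
  rw [this, Real.dist_eq]
  rcases hs with h | h
  · rw [abs_of_nonpos (by linarith)]; linarith
  · rw [abs_of_nonneg (by linarith)]; linarith

lemma phib_deriv_zero {s : ℝ} (hs : s ≤ 1 ∨ 4 ≤ s) : deriv (phib : ℝ → ℝ) s = 0 := by
  apply IsLocalMin.deriv_eq_zero
  refine Filter.Eventually.of_forall fun y => ?_
  rw [phib_zero hs]
  exact phib.nonneg

lemma phib_hasDerivAt (s : ℝ) : HasDerivAt (phib : ℝ → ℝ) (deriv (phib : ℝ → ℝ) s) s :=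
  ((phib.contDiff (n := 1)).differentiable one_ne_zero s).hasDerivAt

lemma phib_deriv_cont : Continuous (deriv (phib : ℝ → ℝ)) :=
  (phib.contDiff (n := 1)).continuous_deriv le_rfl

lemma sq_mem {r : ℝ} (h1 : (1:ℝ) < r) (h2 : r < 2) : r^2 ∈ ball (5/2 : ℝ) (3/2) := by
  rw [mem_ball, Real.dist_eq, abs_lt]
  constructor <;> nlinarith

/-! ### Radial integrals -/

lemma radial_c2_pos (m : ℕ) : 0 < ∫ r in Ioi (0:ℝ), r ^ m * phib (r^2) := by
  have hcont : Continuous fun r : ℝ => r ^ m * phib (r^2) :=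
    (continuous_pow m).mul (phib.continuous.comp (continuous_pow 2))
  have hsupp : ∀ r : ℝ, r ∉ Icc (-2:ℝ) 2 → r ^ m * phib (r^2) = 0 := by
    intro r hr
    simp only [mem_Icc, not_and_or, not_le] at hr
    have : (4:ℝ) ≤ r^2 := by rcases hr with h | h <;> nlinarith
    rw [phib_zero (Or.inr this), mul_zero]
  have hint : Integrable (fun r : ℝ => r ^ m * phib (r^2)) :=
    hcont.integrable_of_hasCompactSupport (HasCompactSupport.intro isCompact_Icc hsupp)
  rw [setIntegral_pos_iff_support_of_nonneg_ae]
  · have hsub : Ioo (1:ℝ) 2 ⊆ (Function.support fun r => r ^ m * phib (r^2)) ∩ Ioi 0 := by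
      intro r hr
      obtain ⟨h1, h2⟩ := hr
      refine ⟨?_, lt_trans one_pos h1⟩
      simp only [Function.mem_support]
      have hpos : 0 < phib (r^2) := phib.pos_of_mem_ball (sq_mem h1 h2)
      have hrpos : (0:ℝ) < r := lt_trans one_pos h1
      exact (mul_pos (pow_pos hrpos m) hpos).ne'
    calc (0:ENNReal) < volume (Ioo (1:ℝ) 2) := by rw [Real.volume_Ioo]; norm_num
      _ ≤ _ := measure_mono hsub
  · filter_upwards [ae_restrict_mem measurableSet_Ioi] with r hr
    have hrpos : (0:ℝ) < r := hr
    have := phib.nonneg (x := r^2)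
    positivity
  · exact hint.integrableOn

lemma phib_sq_zero_of_small {r : ℝ} (h : r ∈ Ioi (0:ℝ) \ Ioc (1/2 : ℝ) 3) :
    phib (r^2) = 0 ∧ deriv (phib : ℝ → ℝ) (r^2) = 0 := by
  obtain ⟨h0, h1⟩ := h
  have h0 : (0:ℝ) < r := h0
  simp only [mem_Ioc, not_and_or, not_le, not_lt] at h1
  have : r^2 ≤ 1 ∨ 4 ≤ r^2 := by
    rcases h1 with h | h
    · left; nlinarith
    · right; nlinarith
  exact ⟨phib_zero this, phib_deriv_zero this⟩

lemma radial_ibp {n : ℕ} (hn : 2 ≤ n) :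
    ∫ r in Ioi (0:ℝ), r ^ (n-1) * (2 * r * deriv (phib : ℝ → ℝ) (r^2)) =
      -((n:ℝ) - 1) * ∫ r in Ioi (0:ℝ), r ^ (n-2) * phib (r^2) := by
  have hle : (1/2 : ℝ) ≤ 3 := by norm_num
  have hsub : Ioc (1/2 : ℝ) 3 ⊆ Ioi (0:ℝ) := fun x hx => lt_trans (by norm_num) hx.1
  have e1 : ∫ r in Ioi (0:ℝ), r ^ (n-1) * (2 * r * deriv (phib : ℝ → ℝ) (r^2)) =
      ∫ r in (1/2 : ℝ)..3, r ^ (n-1) * (2 * r * deriv (phib : ℝ → ℝ) (r^2)) := by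
    rw [intervalIntegral.integral_of_le hle,
      setIntegral_eq_of_subset_of_forall_diff_eq_zero measurableSet_Ioi hsub]
    intro x hx
    rw [(phib_sq_zero_of_small hx).2]; ring
  have e2 : ∫ r in Ioi (0:ℝ), r ^ (n-2) * phib (r^2) =
      ∫ r in (1/2 : ℝ)..3, r ^ (n-2) * phib (r^2) := by
    rw [intervalIntegral.integral_of_le hle,
      setIntegral_eq_of_subset_of_forall_diff_eq_zero measurableSet_Ioi hsub]
    intro x hx
    rw [(phib_sq_zero_of_small hx).1]; ring
  rw [e1, e2]
  set A : ℝ → ℝ := fun r => (↑(n-1) * r ^ (n-1-1)) * phib (r^2) with hA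
  set B : ℝ → ℝ := fun r => r^(n-1) * (deriv (phib : ℝ → ℝ) (r^2) * (2*r)) with hB
  have hAc : Continuous A :=
    (continuous_const.mul (continuous_pow _)).mul
      (phib.continuous.comp (continuous_pow 2))
  have hBc : Continuous B :=
    (continuous_pow _).mul
      ((phib_deriv_cont.comp (continuous_pow 2)).mul (continuous_const.mul continuous_id))
  have hderiv : ∀ x ∈ Set.uIcc (1/2 : ℝ) 3,
      HasDerivAt (fun r => r^(n-1) * phib (r^2)) (A x + B x) x := by
    intro x _
    have h1 : HasDerivAt (fun r : ℝ => r ^ (n-1)) (↑(n-1) * x ^ (n-1-1)) x :=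
      hasDerivAt_pow (n-1) x
    have h2 : HasDerivAt (fun r : ℝ => phib (r^2))
        (deriv (phib : ℝ → ℝ) (x^2) * (2*x)) x := by
      have := (phib_hasDerivAt (x^2)).comp x ((hasDerivAt_pow 2 x))
      simpa [Function.comp_def, Nat.cast_ofNat, pow_one, mul_comm] using this
    exact h1.mul h2
  have hzero : ∫ x in (1/2 : ℝ)..3, (A x + B x) = 0 := by
    rw [intervalIntegral.integral_eq_sub_of_hasDerivAt hderiv
      ((hAc.add hBc).intervalIntegrable _ _)]
    have h3 : phib ((3:ℝ)^2) = 0 := phib_zero (by norm_num)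
    have h4 : phib (((1:ℝ)/2)^2) = 0 := phib_zero (by norm_num)
    rw [h3, h4]; ring
  rw [intervalIntegral.integral_add (hAc.intervalIntegrable _ _)
    (hBc.intervalIntegrable _ _)] at hzero
  have hBeq : ∫ x in (1/2 : ℝ)..3, x ^ (n-1) * (2 * x * deriv (phib : ℝ → ℝ) (x^2)) =
      ∫ x in (1/2 : ℝ)..3, B x := by
    apply intervalIntegral.integral_congr
    intro x _
    simp only [hB]; ring
  have hAeq : ∫ x in (1/2 : ℝ)..3, A x =
      ((n:ℝ) - 1) * ∫ x in (1/2 : ℝ)..3, x ^ (n-2) * phib (x^2) := by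
    rw [← intervalIntegral.integral_const_mul]
    apply intervalIntegral.integral_congr
    intro x _
    simp only [hA]
    have hcast : ((n-1 : ℕ) : ℝ) = (n:ℝ) - 1 := by
      rw [Nat.cast_sub (by omega), Nat.cast_one]
    have hexp : n - 1 - 1 = n - 2 := by omega
    rw [hcast, hexp]; ring
  rw [hBeq]
  linarith [hzero, hAeq]

/-! ### Polar decomposition of integrals -/

variable {n : ℕ} {G : Type*} [NormedAddCommGroup G] [NormedSpace ℝ G]

lemma polar_integral (hn : 1 ≤ n) (f : EuclideanSpace ℝ (Fin n) → G) (ψ : ℝ → ℝ)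
    (g : sphere (0 : EuclideanSpace ℝ (Fin n)) 1 → G)
    (h : ∀ r : ℝ, 0 < r → ∀ θ : sphere (0 : EuclideanSpace ℝ (Fin n)) 1,
      f (r • (θ : EuclideanSpace ℝ (Fin n))) = ψ r • g θ) :
    ∫ x, f x = (∫ r in Ioi (0:ℝ), r ^ (n - 1) * ψ r) •
      ∫ θ, g θ ∂(volume : Measure (EuclideanSpace ℝ (Fin n))).toSphere := by
  haveI : Nontrivial (EuclideanSpace ℝ (Fin n)) :=
    Module.nontrivial_of_finrank_pos (R := ℝ) (by rw [finrank_euclideanSpace_fin]; omega)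
  have hd : Module.finrank ℝ (EuclideanSpace ℝ (Fin n)) = n := finrank_euclideanSpace_fin
  let E := EuclideanSpace ℝ (Fin n)
  calc ∫ x, f x
      = ∫ x : ({0}ᶜ : Set E), f x ∂((volume : Measure E).comap Subtype.val) := by
        rw [integral_subtype_comap (measurableSet_singleton _).compl f,
          MeasureTheory.restrict_compl_singleton]
    _ = ∫ p : sphere (0:E) 1 × Ioi (0:ℝ), ψ p.2.1 • g p.1
          ∂((volume : Measure E).toSphere.prod (.volumeIoiPow (Module.finrank ℝ E - 1))) := by
        rw [← (volume : Measure E).measurePreserving_homeomorphUnitSphereProd.integral_comp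
          (Homeomorph.measurableEmbedding _) (fun p => ψ p.2.1 • g p.1)]
        refine integral_congr_ae (Filter.Eventually.of_forall fun x => ?_)
        have hx : (x : E) ≠ 0 := x.2
        have := h ‖(x:E)‖ (norm_pos_iff.2 hx) ((homeomorphUnitSphereProd E x).1)
        simp only [homeomorphUnitSphereProd_apply_fst_coe] at this ⊢
        rw [homeomorphUnitSphereProd_apply_snd_coe]
        rw [← this, smul_inv_smul₀ (norm_ne_zero_iff.2 hx)]
    _ = (∫ r : Ioi (0:ℝ), ψ r ∂(Measure.volumeIoiPow (Module.finrank ℝ E - 1))) •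
          ∫ θ, g θ ∂(volume : Measure E).toSphere := by
        rw [← integral_prod_swap]
        exact integral_prod_smul (fun r : Ioi (0:ℝ) => ψ r.1) g
    _ = (∫ r in Ioi (0:ℝ), r ^ (n - 1) * ψ r) • ∫ θ, g θ ∂(volume : Measure E).toSphere := by
        congr 1
        rw [hd]
        simp only [Measure.volumeIoiPow, ENNReal.ofReal]
        rw [integral_withDensity_eq_integral_smul
          ((measurable_subtype_coe.pow_const _).real_toNNReal),
          integral_subtype_comap measurableSet_Ioi (fun x : ℝ => (x ^ (n-1)).toNNReal • ψ x)]
        refine setIntegral_congr_fun measurableSet_Ioi fun x hx => ?_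
        rw [NNReal.smul_def, Real.coe_toNNReal _ (pow_nonneg hx.out.le _), smul_eq_mul]

lemma sphereUniform_integral (hn : 1 ≤ n) (f : EuclideanSpace ℝ (Fin n) → G)
    (hf : ContinuousOn f {0}ᶜ) :
    ∫ θ, f θ ∂(sphereUniform n) =
      (∫ r in Ioi (0:ℝ), r ^ (n - 1) * ((2 * π) ^ (-(n:ℝ)/2) * Real.exp (-r ^ 2 / 2))) •
        ∫ θ, f θ.1 ∂(volume : Measure (EuclideanSpace ℝ (Fin n))).toSphere := by
  haveI : Nontrivial (EuclideanSpace ℝ (Fin n)) :=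
    Module.nontrivial_of_finrank_pos (R := ℝ) (by rw [finrank_euclideanSpace_fin]; omega)
  set T : EuclideanSpace ℝ (Fin n) → EuclideanSpace ℝ (Fin n) := fun x => ‖x‖⁻¹ • x with hT
  have hTm : Measurable T := measurable_norm.inv.smul measurable_id
  have hγvol : stdGaussian n ≪ (volume : Measure (EuclideanSpace ℝ (Fin n))) :=
    withDensity_absolutelyContinuous _ _
  have hσ0 : sphereUniform n {0} = 0 := by
    rw [sphereUniform, Measure.map_apply hTm (measurableSet_singleton 0)]
    have : T ⁻¹' {0} = {0} := by
      ext x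
      simp only [mem_preimage, mem_singleton_iff]
      constructor
      · intro hx
        by_contra hx0
        exact (smul_ne_zero (inv_ne_zero (norm_ne_zero_iff.2 hx0)) hx0) hx
      · intro hx; simp [hT, hx]
    rw [this]
    exact hγvol (measure_singleton 0)
  have hfm : AEStronglyMeasurable f (sphereUniform n) := by
    have h1 : (sphereUniform n).restrict {(0: EuclideanSpace ℝ (Fin n))}ᶜ = sphereUniform n := by
      apply Measure.restrict_eq_self_of_ae_mem
      rw [Filter.Eventually, mem_ae_iff]
      simpa using hσ0
    rw [← h1]
    exact hf.aestronglyMeasurable (measurableSet_singleton _).compl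
  have step1 : ∫ θ, f θ ∂(sphereUniform n) = ∫ x, f (T x) ∂(stdGaussian n) := by
    rw [sphereUniform] at hfm ⊢
    exact integral_map hTm.aemeasurable hfm
  have hρc : Continuous fun x : EuclideanSpace ℝ (Fin n) =>
      (2 * π) ^ (-(n:ℝ)/2) * Real.exp (-‖x‖ ^ 2 / 2) :=
    continuous_const.mul (Real.continuous_exp.comp
      ((continuous_norm.pow 2).neg.div_const 2))
  have step2 : ∫ x, f (T x) ∂(stdGaussian n) =
      ∫ x, ((2 * π) ^ (-(n:ℝ)/2) * Real.exp (-‖x‖ ^ 2 / 2)) • f (T x) := by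
    rw [stdGaussian]
    simp only [ENNReal.ofReal]
    rw [integral_withDensity_eq_integral_smul hρc.measurable.real_toNNReal]
    refine integral_congr_ae (Filter.Eventually.of_forall fun x => ?_)
    show (_ : NNReal) • _ = _
    rw [NNReal.smul_def, Real.coe_toNNReal]
    positivity
  rw [step1, step2]
  refine polar_integral hn _ _ _ fun r hr θ => ?_
  have hθ : ‖(θ : EuclideanSpace ℝ (Fin n))‖ = 1 := mem_sphere_zero_iff_norm.1 θ.2
  have hnrm : ‖r • (θ : EuclideanSpace ℝ (Fin n))‖ = r := by
    rw [norm_smul, hθ, Real.norm_eq_abs, abs_of_pos hr, mul_one]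
  have hTθ : T (r • (θ : EuclideanSpace ℝ (Fin n))) = θ := by
    rw [hT]; simp only [hnrm]
    rw [smul_smul, inv_mul_cancel₀ hr.ne', one_smul]
  rw [hnrm, hTθ]

lemma cont_of_vanish {F G : Type*} [NormedAddCommGroup F] [NormedAddCommGroup G]
    {f : F → G} (hf : ContinuousOn f {0}ᶜ) (h0 : ∀ x, ‖x‖ ≤ 1 → f x = 0) :
    Continuous f := by
  rw [continuous_iff_continuousAt]
  intro x
  by_cases hx : x = 0
  · subst hx
    have hev : f =ᶠ[nhds (0:F)] fun _ => 0 := by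
      filter_upwards [Metric.ball_mem_nhds (0:F) one_pos] with y hy
      exact h0 y (mem_ball_zero_iff.1 hy).le
    exact hev.continuousAt
  · exact hf.continuousAt (isOpen_compl_singleton.mem_nhds (by simpa using hx))

lemma hcs_of_vanish {F G : Type*} [NormedAddCommGroup F] [ProperSpace F] [NormedAddCommGroup G]
    {f : F → G} (h2 : ∀ x, 2 ≤ ‖x‖ → f x = 0) : HasCompactSupport f :=
  HasCompactSupport.intro (isCompact_closedBall 0 2) fun x hx =>
    h2 x (le_of_lt (by rwa [Metric.mem_closedBall, dist_zero_right, not_le] at hx))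

end Statement12Aux


set_option maxHeartbeats 2000000 in
open Statement12Aux Set Metric in
/-- For a `C¹` 0-homogeneous `u` (whose gradient on the sphere is the spherical
gradient of its restriction `f`):
`∫ f(θ) θ dσ_{n-1} = (1/(n-1)) ∫ ∇_S f(θ) dσ_{n-1}` as vectors in `ℝⁿ`. -/
theorem statement12 (n : ℕ) (hn : 2 ≤ n) (u : EuclideanSpace ℝ (Fin n) → ℝ)
    (hu : ContDiffOn ℝ 1 u {(0 : EuclideanSpace ℝ (Fin n))}ᶜ)
    (huh : ∀ r : ℝ, 0 < r → ∀ x : EuclideanSpace ℝ (Fin n), x ≠ 0 → u (r • x) = u x) :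
    (∫ θ, u θ • θ ∂(sphereUniform n)) =
      (((n : ℝ) - 1)⁻¹) • ∫ θ, gradient u θ ∂(sphereUniform n) := by
  classical
  have hn1 : 1 ≤ n := by omega
  have hne : ((n:ℝ) - 1) ≠ 0 := by
    have h2 : (2:ℝ) ≤ (n:ℝ) := by exact_mod_cast hn
    linarith
  -- basic facts about u
  have hmemc : ∀ x : EuclideanSpace ℝ (Fin n), x ≠ 0 →
      x ∈ ({(0 : EuclideanSpace ℝ (Fin n))}ᶜ : Set _) := fun x hx => by simpa using hx
  have hud : ∀ x : EuclideanSpace ℝ (Fin n), x ≠ 0 → DifferentiableAt ℝ u x := fun x hx =>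
    (hu.contDiffAt (isOpen_compl_singleton.mem_nhds (hmemc x hx))).differentiableAt one_ne_zero
  have hucont : ContinuousOn u {0}ᶜ := hu.continuousOn
  have hufc : ContinuousOn (fun x => fderiv ℝ u x) {0}ᶜ :=
    hu.continuousOn_fderiv_of_isOpen isOpen_compl_singleton le_rfl
  -- homogeneity of the derivative
  have hfdh : ∀ (x : EuclideanSpace ℝ (Fin n)), x ≠ 0 → ∀ c : ℝ, 0 < c →
      fderiv ℝ u (c • x) = c⁻¹ • fderiv ℝ u x := by
    intro x hx c hc
    have hcx : c • x ≠ 0 := smul_ne_zero hc.ne' hx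
    have hEq : (fun y => u (c • y)) =ᶠ[nhds x] u := by
      filter_upwards [isOpen_compl_singleton.mem_nhds (hmemc x hx)] with y hy
      exact huh c hc y (by simpa using hy)
    have hcomp : HasFDerivAt (fun y => u (c • y))
        ((fderiv ℝ u (c • x)).comp (c • ContinuousLinearMap.id ℝ (EuclideanSpace ℝ (Fin n)))) x :=
      ((hud _ hcx).hasFDerivAt).comp x ((hasFDerivAt_id x).const_smul c)
    have h1 : fderiv ℝ (fun y => u (c • y)) x = fderiv ℝ u x := hEq.fderiv_eq
    rw [hcomp.fderiv] at h1
    have h2 : c • fderiv ℝ u (c • x) = fderiv ℝ u x := by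
      rw [← h1]; ext v
      simp [mul_comm]
    rw [← h2, smul_smul, inv_mul_cancel₀ hc.ne', one_smul]
  -- the cutoff function
  set χ : EuclideanSpace ℝ (Fin n) → ℝ := fun x => phib (‖x‖^2) with hχdef
  set χ' : EuclideanSpace ℝ (Fin n) → EuclideanSpace ℝ (Fin n) →L[ℝ] ℝ :=
    fun x => deriv (phib : ℝ → ℝ) (‖x‖^2) • (2 • (innerSL ℝ x)) with hχ'def
  have hχ'app : ∀ (x v : EuclideanSpace ℝ (Fin n)),
      χ' x v = deriv (phib : ℝ → ℝ) (‖x‖^2) * (2 * ⟪x, v⟫) := by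
    intro x v
    rw [hχ'def]
    simp only [ContinuousLinearMap.smul_apply, innerSL_apply_apply, smul_eq_mul,
      nsmul_eq_mul, Nat.cast_ofNat]
  have hχd : ∀ x, HasFDerivAt χ (χ' x) x := by
    intro x
    have := (phib_hasDerivAt (‖x‖^2)).comp_hasFDerivAt x
      (hasStrictFDerivAt_norm_sq x).hasFDerivAt
    simpa [Function.comp_def, hχdef, hχ'def] using this
  have hsmall : ∀ x : EuclideanSpace ℝ (Fin n), ‖x‖ ≤ 1 → (‖x‖^2 ≤ 1 ∨ 4 ≤ ‖x‖^2) :=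
    fun x hx => Or.inl (by nlinarith [norm_nonneg x])
  have hbig : ∀ x : EuclideanSpace ℝ (Fin n), 2 ≤ ‖x‖ → (‖x‖^2 ≤ 1 ∨ 4 ≤ ‖x‖^2) :=
    fun x hx => Or.inr (by nlinarith [norm_nonneg x])
  have hχ0 : ∀ x : EuclideanSpace ℝ (Fin n), ‖x‖ ≤ 1 → χ x = 0 :=
    fun x hx => phib_zero (hsmall x hx)
  have hχb : ∀ x : EuclideanSpace ℝ (Fin n), 2 ≤ ‖x‖ → χ x = 0 :=
    fun x hx => phib_zero (hbig x hx)
  have hχ'0 : ∀ x : EuclideanSpace ℝ (Fin n), ‖x‖ ≤ 1 → χ' x = 0 := by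
    intro x hx
    rw [hχ'def]
    simp [phib_deriv_zero (hsmall x hx)]
  have hχ'b : ∀ x : EuclideanSpace ℝ (Fin n), 2 ≤ ‖x‖ → χ' x = 0 := by
    intro x hx
    rw [hχ'def]
    simp [phib_deriv_zero (hbig x hx)]
  have hχcont : Continuous χ := phib.continuous.comp (continuous_norm.pow 2)
  have hχ'vcont : ∀ v, Continuous fun x : EuclideanSpace ℝ (Fin n) => χ' x v := by
    intro v
    simp only [hχ'app]
    exact ((phib_deriv_cont.comp (continuous_norm.pow 2)).mul
      (continuous_const.mul (continuous_id.inner continuous_const)))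
  -- the compactly supported product
  set w : EuclideanSpace ℝ (Fin n) → ℝ := fun x => χ x * u x with hwdef
  set w' : EuclideanSpace ℝ (Fin n) → EuclideanSpace ℝ (Fin n) →L[ℝ] ℝ :=
    fun x => χ x • fderiv ℝ u x + u x • χ' x with hw'def
  have hwd : ∀ x, HasFDerivAt w (w' x) x := by
    intro x
    by_cases hx : x = 0
    · subst hx
      have hev : w =ᶠ[nhds (0 : EuclideanSpace ℝ (Fin n))] fun _ => 0 := by
        filter_upwards [Metric.ball_mem_nhds (0 : EuclideanSpace ℝ (Fin n)) one_pos] with y hy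
        rw [hwdef]
        simp only []
        rw [hχ0 y (mem_ball_zero_iff.1 hy).le, zero_mul]
      have h0 : HasFDerivAt w (0 : EuclideanSpace ℝ (Fin n) →L[ℝ] ℝ) 0 :=
        (hasFDerivAt_const (0:ℝ) (0 : EuclideanSpace ℝ (Fin n))).congr_of_eventuallyEq hev
      convert h0 using 1
      rw [hw'def]
      simp only []
      rw [hχ0 0 (by simp), hχ'0 0 (by simp)]
      simp
    · exact (hχd x).mul ((hud x hx).hasFDerivAt)
  have hwdiff : Differentiable ℝ w := fun x => (hwd x).differentiableAt
  have hwfd : ∀ x, fderiv ℝ w x = w' x := fun x => (hwd x).fderiv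
  -- integrability
  have hint_w : Integrable w := by
    refine (cont_of_vanish (hχcont.continuousOn.mul hucont) ?_).integrable_of_hasCompactSupport
      (hcs_of_vanish ?_)
    · intro x hx; simp only [Pi.mul_apply]; rw [hχ0 x hx, zero_mul]
    · intro x hx; simp only [Pi.mul_apply]; rw [hχb x hx, zero_mul]
  have hint_t1 : ∀ v : EuclideanSpace ℝ (Fin n),
      Integrable (fun x => u x * χ' x v) := by
    intro v
    refine (cont_of_vanish (hucont.mul (hχ'vcont v).continuousOn) ?_).integrable_of_hasCompactSupport
      (hcs_of_vanish ?_)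
    · intro x hx; simp only [Pi.mul_apply]; rw [hχ'0 x hx]; simp
    · intro x hx; simp only [Pi.mul_apply]; rw [hχ'b x hx]; simp
  have hint_t2 : ∀ v : EuclideanSpace ℝ (Fin n),
      Integrable (fun x => χ x * fderiv ℝ u x v) := by
    intro v
    refine (cont_of_vanish (hχcont.continuousOn.mul (hufc.clm_apply continuousOn_const)) ?_).integrable_of_hasCompactSupport
      (hcs_of_vanish ?_)
    · intro x hx; simp only [Pi.mul_apply]; rw [hχ0 x hx, zero_mul]
    · intro x hx; simp only [Pi.mul_apply]; rw [hχb x hx, zero_mul]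
  -- integration by parts : the divergence identity
  have hibp : ∀ v : EuclideanSpace ℝ (Fin n),
      (∫ x, χ x * fderiv ℝ u x v) + (∫ x, u x * χ' x v) = 0 := by
    intro v
    have hsum : (fun x : EuclideanSpace ℝ (Fin n) => fderiv ℝ w x v) =
        fun x => χ x * fderiv ℝ u x v + u x * χ' x v := by
      funext x
      rw [hwfd x, hw'def]
      simp [ContinuousLinearMap.add_apply, ContinuousLinearMap.smul_apply, smul_eq_mul]
    have h1 : Integrable (fun x : EuclideanSpace ℝ (Fin n) =>
        fderiv ℝ (fun _ : EuclideanSpace ℝ (Fin n) => (1:ℝ)) x v • w x) := by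
      have : (fun x : EuclideanSpace ℝ (Fin n) =>
          fderiv ℝ (fun _ : EuclideanSpace ℝ (Fin n) => (1:ℝ)) x v • w x) = fun _ => 0 := by
        funext x; simp [fderiv_const]
      rw [this]
      exact integrable_zero _ _ _
    have h2 : Integrable (fun x : EuclideanSpace ℝ (Fin n) =>
        (fun _ : EuclideanSpace ℝ (Fin n) => (1:ℝ)) x • fderiv ℝ w x v) := by
      simp only [one_smul]
      rw [hsum]
      exact (hint_t2 v).add (hint_t1 v)
    have h3 : Integrable (fun x : EuclideanSpace ℝ (Fin n) =>
        (fun _ : EuclideanSpace ℝ (Fin n) => (1:ℝ)) x • w x) := by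
      simpa using hint_w
    have key := integral_smul_fderiv_eq_neg_fderiv_smul_of_integrable
      (μ := volume) (f := fun _ : EuclideanSpace ℝ (Fin n) => (1:ℝ)) (g := w) (v := v)
      h1 h2 h3 (fun x _ => differentiableAt_const _) (fun x _ => hwdiff x)
    simp only [one_smul, fderiv_const, fderiv_fun_const, Pi.zero_apply, ContinuousLinearMap.zero_apply,
      zero_smul, integral_zero, neg_zero] at key
    rw [hsum] at key
    rw [integral_add (hint_t2 v) (hint_t1 v)] at key
    exact key
  -- polar decomposition of the two terms
  have hsphere_ne : ∀ θ : sphere (0 : EuclideanSpace ℝ (Fin n)) 1, (θ : EuclideanSpace ℝ (Fin n)) ≠ 0 :=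
    fun θ => ne_of_mem_sphere θ.2 one_ne_zero
  have hsphere_norm : ∀ θ : sphere (0 : EuclideanSpace ℝ (Fin n)) 1,
      ‖(θ : EuclideanSpace ℝ (Fin n))‖ = 1 := fun θ => mem_sphere_zero_iff_norm.1 θ.2
  have hnrm : ∀ (r : ℝ), 0 < r → ∀ θ : sphere (0 : EuclideanSpace ℝ (Fin n)) 1,
      ‖r • (θ : EuclideanSpace ℝ (Fin n))‖ = r := by
    intro r hr θ
    rw [norm_smul, hsphere_norm θ, Real.norm_eq_abs, abs_of_pos hr, mul_one]
  have hP1 : ∀ v : EuclideanSpace ℝ (Fin n), (∫ x, u x * χ' x v) =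
      (∫ r in Ioi (0:ℝ), r^(n-1) * (2 * r * deriv (phib : ℝ → ℝ) (r^2))) •
        ∫ θ : sphere (0 : EuclideanSpace ℝ (Fin n)) 1,
          (u θ.1 * ⟪(θ.1 : EuclideanSpace ℝ (Fin n)), v⟫)
          ∂(volume : Measure (EuclideanSpace ℝ (Fin n))).toSphere := by
    intro v
    refine polar_integral hn1 _ _ _ fun r hr θ => ?_
    rw [huh r hr _ (hsphere_ne θ), hχ'app, hnrm r hr θ, real_inner_smul_left]
    simp only [smul_eq_mul]
    ring
  have hP2 : ∀ v : EuclideanSpace ℝ (Fin n), (∫ x, χ x * fderiv ℝ u x v) =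
      (∫ r in Ioi (0:ℝ), r^(n-1) * (r⁻¹ * phib (r^2))) •
        ∫ θ : sphere (0 : EuclideanSpace ℝ (Fin n)) 1,
          fderiv ℝ u θ.1 v
          ∂(volume : Measure (EuclideanSpace ℝ (Fin n))).toSphere := by
    intro v
    refine polar_integral hn1 _ _ _ fun r hr θ => ?_
    have hχval : χ (r • (θ.1 : EuclideanSpace ℝ (Fin n))) = phib (r^2) := by
      rw [hχdef]; simp only []; rw [hnrm r hr θ]
    rw [hχval, hfdh θ.1 (hsphere_ne θ) r hr]
    simp only [ContinuousLinearMap.smul_apply, smul_eq_mul]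
    ring
  have hC2 : (∫ r in Ioi (0:ℝ), r^(n-1) * (r⁻¹ * phib (r^2))) =
      ∫ r in Ioi (0:ℝ), r^(n-2) * phib (r^2) := by
    refine setIntegral_congr_fun measurableSet_Ioi fun r hr => ?_
    have hr0 : (0:ℝ) < r := hr
    have hpow : r^(n-1) = r^(n-2) * r := by
      rw [← pow_succ]; congr 1; omega
    rw [hpow]
    field_simp
  -- the key scalar identity on the sphere
  have hkey : ∀ v : EuclideanSpace ℝ (Fin n),
      (∫ θ : sphere (0 : EuclideanSpace ℝ (Fin n)) 1, fderiv ℝ u θ.1 v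
        ∂(volume : Measure (EuclideanSpace ℝ (Fin n))).toSphere) =
      ((n:ℝ) - 1) * ∫ θ : sphere (0 : EuclideanSpace ℝ (Fin n)) 1,
        (u θ.1 * ⟪(θ.1 : EuclideanSpace ℝ (Fin n)), v⟫)
        ∂(volume : Measure (EuclideanSpace ℝ (Fin n))).toSphere := by
    intro v
    have h := hibp v
    rw [hP1 v, hP2 v, hC2, radial_ibp hn] at h
    have hc2 := radial_c2_pos (n-2)
    set c2 := ∫ r in Ioi (0:ℝ), r^(n-2) * phib (r^2) with hc2def
    set I1 := ∫ θ : sphere (0 : EuclideanSpace ℝ (Fin n)) 1,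
        (u θ.1 * ⟪(θ.1 : EuclideanSpace ℝ (Fin n)), v⟫)
        ∂(volume : Measure (EuclideanSpace ℝ (Fin n))).toSphere with hI1def
    set I2 := ∫ θ : sphere (0 : EuclideanSpace ℝ (Fin n)) 1, fderiv ℝ u θ.1 v
        ∂(volume : Measure (EuclideanSpace ℝ (Fin n))).toSphere with hI2def
    simp only [smul_eq_mul] at h
    have : c2 * (I2 - ((n:ℝ) - 1) * I1) = 0 := by ring_nf; ring_nf at h; linarith
    rcases mul_eq_zero.1 this with hc | hI
    · exact absurd hc hc2.ne'
    · linarith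
  -- vectorize via inner products
  have hcu : Continuous fun θ : sphere (0 : EuclideanSpace ℝ (Fin n)) 1 => u θ.1 :=
    hucont.comp_continuous continuous_subtype_val (fun θ => hmemc _ (hsphere_ne θ))
  have hgradcont : ContinuousOn (gradient u) {0}ᶜ := by
    have hg : gradient u = fun x =>
        (InnerProductSpace.toDual ℝ (EuclideanSpace ℝ (Fin n))).symm (fderiv ℝ u x) := rfl
    rw [hg]
    exact (InnerProductSpace.toDual ℝ (EuclideanSpace ℝ (Fin n))).symm.continuous.comp_continuousOn hufc
  have hAi : Integrable (fun θ : sphere (0 : EuclideanSpace ℝ (Fin n)) 1 =>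
      u θ.1 • (θ.1 : EuclideanSpace ℝ (Fin n)))
      (volume : Measure (EuclideanSpace ℝ (Fin n))).toSphere :=
    (hcu.smul continuous_subtype_val).integrable_of_hasCompactSupport
      (IsCompact.of_isClosed_subset isCompact_univ (isClosed_tsupport _) (Set.subset_univ _))
  have hBi : Integrable (fun θ : sphere (0 : EuclideanSpace ℝ (Fin n)) 1 => gradient u θ.1)
      (volume : Measure (EuclideanSpace ℝ (Fin n))).toSphere :=
    (hgradcont.comp_continuous continuous_subtype_val
      (fun θ => hmemc _ (hsphere_ne θ))).integrable_of_hasCompactSupport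
      (IsCompact.of_isClosed_subset isCompact_univ (isClosed_tsupport _) (Set.subset_univ _))
  have hinner_grad : ∀ (x v : EuclideanSpace ℝ (Fin n)),
      ⟪gradient u x, v⟫ = fderiv ℝ u x v := fun x v =>
    InnerProductSpace.toDual_symm_apply
  have hvec : ((n:ℝ) - 1) • (∫ θ : sphere (0 : EuclideanSpace ℝ (Fin n)) 1,
      u θ.1 • (θ.1 : EuclideanSpace ℝ (Fin n))
      ∂(volume : Measure (EuclideanSpace ℝ (Fin n))).toSphere) =
      ∫ θ : sphere (0 : EuclideanSpace ℝ (Fin n)) 1, gradient u θ.1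
      ∂(volume : Measure (EuclideanSpace ℝ (Fin n))).toSphere := by
    apply ext_inner_right ℝ
    intro v
    rw [real_inner_smul_left]
    calc ((n:ℝ) - 1) * ⟪∫ θ : sphere (0 : EuclideanSpace ℝ (Fin n)) 1,
          u θ.1 • (θ.1 : EuclideanSpace ℝ (Fin n))
          ∂(volume : Measure (EuclideanSpace ℝ (Fin n))).toSphere, v⟫
        = ((n:ℝ) - 1) * ∫ θ : sphere (0 : EuclideanSpace ℝ (Fin n)) 1,
            (u θ.1 * ⟪(θ.1 : EuclideanSpace ℝ (Fin n)), v⟫)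
            ∂(volume : Measure (EuclideanSpace ℝ (Fin n))).toSphere := by
          rw [real_inner_comm, ← integral_inner hAi v]
          congr 1
          refine integral_congr_ae (Filter.Eventually.of_forall fun θ => ?_)
          show ⟪v, u θ.1 • (θ.1 : EuclideanSpace ℝ (Fin n))⟫ =
            u θ.1 * ⟪(θ.1 : EuclideanSpace ℝ (Fin n)), v⟫
          rw [real_inner_smul_right, real_inner_comm]
      _ = ∫ θ : sphere (0 : EuclideanSpace ℝ (Fin n)) 1, fderiv ℝ u θ.1 v
            ∂(volume : Measure (EuclideanSpace ℝ (Fin n))).toSphere := (hkey v).symm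
      _ = ∫ θ : sphere (0 : EuclideanSpace ℝ (Fin n)) 1, ⟪v, gradient u θ.1⟫
            ∂(volume : Measure (EuclideanSpace ℝ (Fin n))).toSphere := by
          refine integral_congr_ae (Filter.Eventually.of_forall fun θ => ?_)
          show fderiv ℝ u θ.1 v = ⟪v, gradient u θ.1⟫
          rw [real_inner_comm, hinner_grad]
      _ = ⟪v, ∫ θ : sphere (0 : EuclideanSpace ℝ (Fin n)) 1, gradient u θ.1
            ∂(volume : Measure (EuclideanSpace ℝ (Fin n))).toSphere⟫ := integral_inner hBi v
      _ = ⟪∫ θ : sphere (0 : EuclideanSpace ℝ (Fin n)) 1, gradient u θ.1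
            ∂(volume : Measure (EuclideanSpace ℝ (Fin n))).toSphere, v⟫ := real_inner_comm _ _
  -- assemble
  have hLf : ContinuousOn (fun x : EuclideanSpace ℝ (Fin n) => u x • x) {0}ᶜ :=
    hucont.smul continuousOn_id
  rw [sphereUniform_integral hn1 (fun x => u x • x) hLf,
    sphereUniform_integral hn1 (gradient u) hgradcont, ← hvec,
    smul_comm (∫ r in Ioi (0:ℝ), r ^ (n - 1) * ((2 * π) ^ (-(n:ℝ)/2) * Real.exp (-r ^ 2 / 2)))
      ((n:ℝ) - 1), inv_smul_smul₀ hne]
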